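/- Let X be a complete separable metric space, (P_n) Borel probability measures on X, and I : X → [0,∞] lower semicontinuous such that for every closed set C ⊆ X, limsup_{n→∞} (1/n) log P_n(C) ≤ −inf_{x∈C} I(x). Let F : X → ℝ be bounded and continuous. Then for every closed set C ⊆ X, limsup_{n→∞} (1/n) log ∫_C e^{nF(x)} P_n(dx) ≤ sup_{x∈C}[F(x) − I(x)]. -/

import Mathlib

open Filter MeasureTheory Topology
open scoped ENNReal NNReal

private lemma ereal_mul_add_le (c A : ℝ) (hc : 0 < c) (B : EReal) (hB : B ≠ ⊤) :
    (c : EReal) * ((A : EReal) + B) ≤ ((c * A : ℝ) : EReal) + (c : EReal) * B := by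
  induction B with
  | bot => simp [EReal.add_bot, EReal.mul_bot_of_pos (show (0:EReal) < c by exact_mod_cast hc)]
  | coe b => norm_cast; rw [mul_add]
  | top => exact absurd rfl hB

private lemma limsup_sup'_le {ι : Type*} (s : Finset ι) (hs : s.Nonempty) (v : ι → ℕ → EReal) :
    Filter.limsup (fun n => s.sup' hs (fun j => v j n)) atTop
      ≤ s.sup' hs (fun j => Filter.limsup (v j) atTop) := by
  induction hs using Finset.Nonempty.cons_induction with
  | singleton j => simp only [Finset.sup'_singleton]; exact le_rfl
  | cons j t hjt ht ih =>
    simp only [Finset.sup'_cons ht]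
    rw [show (fun n => v j n ⊔ t.sup' ht fun j => v j n) =
      (fun n => max (v j n) (t.sup' ht fun j => v j n)) from rfl]
    rw [limsup_max]
    exact max_le_max le_rfl ih

private lemma ereal_le_of_forall_add {L S : EReal}
    (h : ∀ δ : ℝ, 0 < δ → L ≤ S + (δ : EReal)) : L ≤ S := by
  induction S with
  | bot => simpa using h 1 one_pos
  | coe s =>
    by_contra hlt
    push_neg at hlt
    obtain ⟨r, hr1, hr2⟩ := EReal.exists_between_coe_real hlt
    have := h (r - s) (by have : (s:EReal) < r := hr1; exact sub_pos.2 (by exact_mod_cast this))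
    rw [← EReal.coe_add] at this
    have : L ≤ (r : EReal) := by simpa using this
    exact absurd (lt_of_le_of_lt this hr2) (lt_irrefl _)
  | top => exact le_top

/-- Upper bound half of Varadhan's lemma: given the LDP upper bound for closed sets with
rate function `I`, for every bounded continuous `F` and every closed set `C`,
`limsup (1/n) log ∫_C e^{nF} dP_n ≤ sup_{x ∈ C} [F x - I x]` (in the extended reals;
the supremum over the empty set is `-∞`). -/
theorem varadhan_upper_bound
    {X : Type*} [MetricSpace X] [CompleteSpace X] [TopologicalSpace.SeparableSpace X]
    [MeasurableSpace X] [BorelSpace X]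
    (P : ℕ → Measure X) (hP : ∀ n, IsProbabilityMeasure (P n))
    (I : X → ENNReal) (hI : LowerSemicontinuous I)
    (hupper : ∀ C : Set X, IsClosed C →
      Filter.limsup (fun n : ℕ => (((n : ℝ)⁻¹ : ℝ) : EReal) * ENNReal.log (P n C)) atTop
        ≤ -(⨅ x ∈ C, (I x : EReal)))
    (F : X → ℝ) (hF : Continuous F) (hFb : ∃ M : ℝ, ∀ x, |F x| ≤ M) :
    ∀ C : Set X, IsClosed C →
      Filter.limsup
        (fun n : ℕ => (((n : ℝ)⁻¹ : ℝ) : EReal) *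
          ENNReal.log (∫⁻ x in C, ENNReal.ofReal (Real.exp (n * F x)) ∂(P n))) atTop
        ≤ ⨆ x ∈ C, ((F x : EReal) - (I x : EReal)) := by
  obtain ⟨M, hM⟩ := hFb
  intro C hC
  set S := ⨆ x ∈ C, ((F x : EReal) - (I x : EReal)) with hSdef
  apply ereal_le_of_forall_add
  intro δ hδ
  set K : ℕ := ⌊2 * M / δ⌋₊ + 1 with hKdef
  have hK : 0 < K := Nat.succ_pos _
  haveI : Nonempty (Fin K) := ⟨⟨0, hK⟩⟩
  have hne : (Finset.univ : Finset (Fin K)).Nonempty := Finset.univ_nonempty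
  set a : ℕ → ℝ := fun j => -M + j * δ with hadef
  set D : ℕ → Set X := fun j => C ∩ F ⁻¹' (Set.Icc (a j) (a j + δ)) with hDdef
  have hDclosed : ∀ j : ℕ, IsClosed (D j) :=
    fun j => hC.inter (IsClosed.preimage hF isClosed_Icc)
  have hDsub : ∀ j : ℕ, D j ⊆ C := fun j => Set.inter_subset_left
  have hDF : ∀ j : ℕ, ∀ x ∈ D j, a j ≤ F x ∧ F x ≤ a j + δ := by
    intro j x hx
    exact ⟨hx.2.1, hx.2.2⟩
  -- covering
  have hcover : C ⊆ ⋃ (j : Fin K), D j.1 := by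
    intro x hx
    have hb := abs_le.1 (hM x)
    have h1 : 0 ≤ (F x + M) / δ := div_nonneg (by linarith) hδ.le
    have hjK : ⌊(F x + M) / δ⌋₊ < K := by
      have h2 : (F x + M) / δ ≤ 2 * M / δ := by
        gcongr
        linarith
      calc ⌊(F x + M) / δ⌋₊ ≤ ⌊2 * M / δ⌋₊ := Nat.floor_le_floor h2
        _ < K := Nat.lt_succ_self _
    refine Set.mem_iUnion.2 ⟨⟨⌊(F x + M) / δ⌋₊, hjK⟩, hx, ?_, ?_⟩
    · show a ⌊(F x + M) / δ⌋₊ ≤ F x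
      have h3 : (⌊(F x + M) / δ⌋₊ : ℝ) ≤ (F x + M) / δ := Nat.floor_le h1
      have h4 : (⌊(F x + M) / δ⌋₊ : ℝ) * δ ≤ F x + M := by
        rw [← le_div_iff₀ hδ]; exact h3
      simp only [hadef]; linarith
    · show F x ≤ a ⌊(F x + M) / δ⌋₊ + δ
      have h3 : (F x + M) / δ < ⌊(F x + M) / δ⌋₊ + 1 := Nat.lt_floor_add_one _
      have h4 : F x + M < (⌊(F x + M) / δ⌋₊ + 1) * δ := by
        rw [← div_lt_iff₀ hδ]; exact_mod_cast h3
      simp only [hadef]; push_cast at h4 ⊢; linarith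
  -- integrand and slice bounds
  set t : Fin K → ℕ → ℝ≥0∞ :=
    fun j n => ENNReal.ofReal (Real.exp (n * (a j.1 + δ))) * P n (D j.1) with htdef
  have ht_ne_top : ∀ (j : Fin K) (n : ℕ), t j n ≠ ⊤ := fun j n =>
    ENNReal.mul_ne_top ENNReal.ofReal_ne_top (measure_ne_top _ _)
  have hint : ∀ n : ℕ,
      (∫⁻ x in C, ENNReal.ofReal (Real.exp (n * F x)) ∂(P n)) ≤ ∑ j : Fin K, t j n := by
    intro n
    calc (∫⁻ x in C, ENNReal.ofReal (Real.exp (n * F x)) ∂(P n))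
        ≤ ∫⁻ x in ⋃ j : Fin K, D j.1, ENNReal.ofReal (Real.exp (n * F x)) ∂(P n) :=
          lintegral_mono_set hcover
      _ ≤ ∑' j : Fin K, ∫⁻ x in D j.1, ENNReal.ofReal (Real.exp (n * F x)) ∂(P n) :=
          lintegral_iUnion_le _ _
      _ = ∑ j : Fin K, ∫⁻ x in D j.1, ENNReal.ofReal (Real.exp (n * F x)) ∂(P n) :=
          tsum_fintype _
      _ ≤ ∑ j : Fin K, t j n := by
          apply Finset.sum_le_sum
          intro j _
          calc (∫⁻ x in D j.1, ENNReal.ofReal (Real.exp (n * F x)) ∂(P n))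
              ≤ ∫⁻ _ in D j.1, ENNReal.ofReal (Real.exp (n * (a j.1 + δ))) ∂(P n) := by
                apply setLIntegral_mono measurable_const
                intro x hx
                exact ENNReal.ofReal_le_ofReal (Real.exp_le_exp.2
                  (mul_le_mul_of_nonneg_left (hDF j.1 x hx).2 (Nat.cast_nonneg n)))
            _ = t j n := setLIntegral_const _ _
  have hlogK : ENNReal.log (K : ℝ≥0∞) = ((Real.log K : ℝ) : EReal) := by
    rw [ENNReal.log_pos_real' (by simpa using hK : 0 < ((K : ℝ≥0∞)).toReal)]
    simp
  -- pointwise key bound for n ≥ 1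
  have key : ∀ n : ℕ, 1 ≤ n →
      (((n : ℝ)⁻¹ : ℝ) : EReal) *
          ENNReal.log (∫⁻ x in C, ENNReal.ofReal (Real.exp (n * F x)) ∂(P n))
        ≤ ((((n : ℝ)⁻¹ * Real.log K) : ℝ) : EReal)
          + Finset.univ.sup' hne
              (fun j => (((n : ℝ)⁻¹ : ℝ) : EReal) * ENNReal.log (t j n)) := by
    intro n hn
    have hnpos : (0:ℝ) < (n:ℝ)⁻¹ := inv_pos.2 (by exact_mod_cast hn)
    have h1 : (∫⁻ x in C, ENNReal.ofReal (Real.exp (n * F x)) ∂(P n))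
        ≤ (K : ℝ≥0∞) * Finset.univ.sup' hne (fun j => t j n) := by
      refine (hint n).trans ?_
      have := Finset.sum_le_card_nsmul Finset.univ (fun j => t j n)
        (Finset.univ.sup' hne (fun j => t j n))
        (fun j _ => Finset.le_sup' (fun j => t j n) (Finset.mem_univ j))
      simpa [Finset.card_univ, nsmul_eq_mul] using this
    have h2 : ENNReal.log (∫⁻ x in C, ENNReal.ofReal (Real.exp (n * F x)) ∂(P n))
        ≤ ((Real.log K : ℝ) : EReal)
          + Finset.univ.sup' hne (fun j => ENNReal.log (t j n)) := by
      refine (ENNReal.log_monotone h1).trans ?_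
      rw [ENNReal.log_mul_add, hlogK]
      apply add_le_add_right
      obtain ⟨i, _, hi⟩ := Finset.exists_mem_eq_sup' hne (fun j => t j n)
      rw [hi]
      exact Finset.le_sup' (fun j => ENNReal.log (t j n)) (Finset.mem_univ i)
    have h3 := mul_le_mul_of_nonneg_left h2
      (le_of_lt (by exact_mod_cast hnpos : (0:EReal) < (((n:ℝ)⁻¹ : ℝ) : EReal)))
    refine h3.trans ?_
    have hBne : Finset.univ.sup' hne (fun j => ENNReal.log (t j n)) ≠ ⊤ := by
      rw [← lt_top_iff_ne_top, Finset.sup'_lt_iff]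
      intro j _
      rw [lt_top_iff_ne_top, Ne, ENNReal.log_eq_top_iff]
      exact ht_ne_top j n
    refine (ereal_mul_add_le _ _ hnpos _ hBne).trans ?_
    apply add_le_add_right
    obtain ⟨i, _, hi⟩ := Finset.exists_mem_eq_sup' hne (fun j => ENNReal.log (t j n))
    rw [hi]
    exact Finset.le_sup' (fun j => (((n:ℝ)⁻¹ : ℝ) : EReal) * ENNReal.log (t j n))
      (Finset.mem_univ i)
  -- limsup of the constant-ish sequence
  have hcs0 : Filter.Tendsto (fun n : ℕ => ((((n:ℝ)⁻¹ * Real.log K) : ℝ) : EReal))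
      atTop (𝓝 (0 : EReal)) := by
    have h0 : Filter.Tendsto (fun n : ℕ => (n:ℝ)⁻¹ * Real.log K) atTop (𝓝 0) := by
      simpa using (tendsto_inv_atTop_nhds_zero_nat (𝕜 := ℝ)).mul_const (Real.log K)
    have := (EReal.tendsto_coe (f := atTop)
      (m := fun n : ℕ => (n:ℝ)⁻¹ * Real.log K) (a := 0)).2 h0
    simpa using this
  have hcslimsup : Filter.limsup
      (fun n : ℕ => ((((n:ℝ)⁻¹ * Real.log K) : ℝ) : EReal)) atTop = 0 := hcs0.limsup_eq
  -- per-slice limsup bound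
  have hperj : ∀ j : Fin K,
      Filter.limsup (fun n : ℕ => (((n:ℝ)⁻¹ : ℝ) : EReal) * ENNReal.log (t j n)) atTop
        ≤ S + (δ : EReal) := by
    intro j
    have hev : ∀ᶠ n : ℕ in atTop,
        (((n:ℝ)⁻¹ : ℝ) : EReal) * ENNReal.log (t j n)
          ≤ (((a j.1 + δ) : ℝ) : EReal)
            + (((n:ℝ)⁻¹ : ℝ) : EReal) * ENNReal.log (P n (D j.1)) := by
      filter_upwards [eventually_ge_atTop 1] with n hn
      have hnpos : (0:ℝ) < (n:ℝ)⁻¹ := inv_pos.2 (by exact_mod_cast hn)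
      have hnne : (n:ℝ) ≠ 0 := by positivity
      have hlogt : ENNReal.log (t j n)
          = (((n * (a j.1 + δ)) : ℝ) : EReal) + ENNReal.log (P n (D j.1)) := by
        rw [show t j n = ENNReal.ofReal (Real.exp (n * (a j.1 + δ))) * P n (D j.1) from rfl,
          ENNReal.log_mul_add, ENNReal.log_ofReal_of_pos (Real.exp_pos _), Real.log_exp]
      rw [hlogt]
      have hPne : ENNReal.log (P n (D j.1)) ≠ ⊤ := by
        rw [Ne, ENNReal.log_eq_top_iff]
        exact measure_ne_top _ _
      refine (ereal_mul_add_le _ _ hnpos _ hPne).trans ?_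
      apply add_le_add_left
      have : (n:ℝ)⁻¹ * ((n:ℝ) * (a j.1 + δ)) = a j.1 + δ := by
        field_simp
      rw [this]
    have hPne2 : (0:ℕ) < 1 := one_pos
    calc Filter.limsup (fun n : ℕ => (((n:ℝ)⁻¹ : ℝ) : EReal) * ENNReal.log (t j n)) atTop
        ≤ Filter.limsup (fun n : ℕ => (((a j.1 + δ) : ℝ) : EReal)
            + (((n:ℝ)⁻¹ : ℝ) : EReal) * ENNReal.log (P n (D j.1))) atTop :=
          limsup_le_limsup hev
      _ ≤ Filter.limsup (fun _ : ℕ => (((a j.1 + δ) : ℝ) : EReal)) atTop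
            + Filter.limsup
              (fun n : ℕ => (((n:ℝ)⁻¹ : ℝ) : EReal) * ENNReal.log (P n (D j.1))) atTop := by
          refine EReal.limsup_add_le ?_ ?_
          · left; rw [limsup_const]; exact EReal.coe_ne_bot _
          · left; rw [limsup_const]; exact EReal.coe_ne_top _
      _ ≤ (((a j.1 + δ) : ℝ) : EReal) + -(⨅ x ∈ D j.1, (I x : EReal)) := by
          rw [limsup_const]
          exact add_le_add_right (hupper (D j.1) (hDclosed j.1)) _
      _ ≤ S + (δ : EReal) := by
          apply EReal.add_le_of_forall_lt
          intro p hp q hq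
          rw [EReal.lt_neg_comm] at hq
          obtain ⟨x, hxmem, hxlt⟩ : ∃ x ∈ D j.1, (I x : EReal) < -q := by
            rw [iInf_lt_iff] at hq
            obtain ⟨x, hx⟩ := hq
            rw [iInf_lt_iff] at hx
            obtain ⟨hxm, hlt⟩ := hx
            exact ⟨x, hxm, hlt⟩
          have hq' : q ≤ -(I x : EReal) := (EReal.lt_neg_comm.mp hxlt).le
          have hp' : p ≤ (((F x + δ) : ℝ) : EReal) := by
            refine hp.le.trans ?_
            have : a j.1 + δ ≤ F x + δ := by linarith [(hDF j.1 x hxmem).1]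
            exact_mod_cast this
          calc p + q ≤ (((F x + δ) : ℝ) : EReal) + -(I x : EReal) := add_le_add hp' hq'
            _ = ((F x : EReal) - (I x : EReal)) + (δ : EReal) := by
                rw [EReal.coe_add, sub_eq_add_neg, add_right_comm]
            _ ≤ S + (δ : EReal) := by
                refine add_le_add_left ?_ _
                rw [hSdef]
                exact le_iSup₂ (f := fun (x : X) (_ : x ∈ C) => (F x : EReal) - (I x : EReal))
                  x (hDsub j.1 hxmem)
  -- conclude
  calc Filter.limsup (fun n : ℕ => (((n : ℝ)⁻¹ : ℝ) : EReal) *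
          ENNReal.log (∫⁻ x in C, ENNReal.ofReal (Real.exp (n * F x)) ∂(P n))) atTop
      ≤ Filter.limsup (fun n : ℕ => ((((n:ℝ)⁻¹ * Real.log K) : ℝ) : EReal)
          + Finset.univ.sup' hne
            (fun j => (((n : ℝ)⁻¹ : ℝ) : EReal) * ENNReal.log (t j n))) atTop := by
        exact limsup_le_limsup (by filter_upwards [eventually_ge_atTop 1] with n hn using key n hn)
    _ ≤ Filter.limsup (fun n : ℕ => ((((n:ℝ)⁻¹ * Real.log K) : ℝ) : EReal)) atTop
          + Filter.limsup (fun n : ℕ => Finset.univ.sup' hne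
            (fun j => (((n : ℝ)⁻¹ : ℝ) : EReal) * ENNReal.log (t j n))) atTop := by
        refine EReal.limsup_add_le ?_ ?_
        · left; rw [hcslimsup]; simp
        · left; rw [hcslimsup]; simp
    _ ≤ 0 + Finset.univ.sup' hne (fun j =>
          Filter.limsup (fun n : ℕ => (((n : ℝ)⁻¹ : ℝ) : EReal) * ENNReal.log (t j n)) atTop) := by
        rw [hcslimsup]
        exact add_le_add_right (limsup_sup'_le Finset.univ hne
          (fun j n => (((n : ℝ)⁻¹ : ℝ) : EReal) * ENNReal.log (t j n))) _
    _ ≤ 0 + (S + (δ : EReal)) := add_le_add_right (Finset.sup'_le _ _ fun j _ => hperj j) _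
    _ = S + (δ : EReal) := zero_add _
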